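/- If a probability measure μ on {0,1}^n has the conditional antipodal pairs property and its rank sequence has no internal zeros, then μ is ultra-log-concave, i.e., the sequence (μ(|η|=i)/C(n,i))_{i=0}^n is log-concave. -/

import Mathlib

open Finset

/-- Number of ones of `η ∈ {0,1}^n`. -/
def wt {n : ℕ} (η : Fin n → Bool) : ℕ := (univ.filter fun i => η i = true).card

/-- Total mass of the event that `η` agrees with `ξ` on the coordinates in `I`. -/
noncomputable def condZ {n : ℕ} (μ : (Fin n → Bool) → ℝ) (I : Finset (Fin n))
    (ξ : Fin n → Bool) : ℝ :=
  ∑ η ∈ univ.filter (fun η : Fin n → Bool => ∀ i ∈ I, η i = ξ i), μ η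

/-- Flip all coordinates outside `I` (antipode in the conditioned cube). -/
def flipOutside {n : ℕ} (I : Finset (Fin n)) (η : Fin n → Bool) : Fin n → Bool :=
  fun i => if i ∈ I then η i else !η i

/-- `γ_j` of the measure obtained from `μ` by conditioning on the values `ξ` of the
coordinates in `I`, regarded as a measure on the remaining `n - |I|` coordinates. -/
noncomputable def condGamma {n : ℕ} (μ : (Fin n → Bool) → ℝ) (I : Finset (Fin n))
    (ξ : Fin n → Bool) (j : ℕ) : ℝ :=
  (((n - I.card).choose j : ℝ))⁻¹ *
    ∑ η ∈ univ.filter (fun η : Fin n → Bool =>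
        (∀ i ∈ I, η i = ξ i) ∧ (univ.filter fun i => i ∉ I ∧ η i = true).card = j),
      (μ η / condZ μ I ξ) * (μ (flipOutside I η) / condZ μ I ξ)

/-- Rank sequence of `μ`. -/
noncomputable def rankSeq {n : ℕ} (μ : (Fin n → Bool) → ℝ) (i : ℕ) : ℝ :=
  ∑ η ∈ univ.filter (fun η : Fin n → Bool => wt η = i), μ η

section Aux
variable {n : ℕ}

lemma CU_card_filter_split (P Q : Fin n → Prop) [DecidablePred P] [DecidablePred Q] :
    (univ.filter Q).card
      = (univ.filter fun i => P i ∧ Q i).card + (univ.filter fun i => ¬ P i ∧ Q i).card := by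
  have h1 : (univ.filter fun i => P i ∧ Q i) = (univ.filter Q).filter P := by
    rw [filter_filter]; exact filter_congr (fun i _ => by tauto)
  have h2 : (univ.filter fun i => ¬ P i ∧ Q i) = (univ.filter Q).filter (fun i => ¬ P i) := by
    rw [filter_filter]; exact filter_congr (fun i _ => by tauto)
  rw [h1, h2, card_filter_add_card_filter_not]

/-- number of ones inside `I` -/
def inOnes (I : Finset (Fin n)) (η : Fin n → Bool) : ℕ :=
  (univ.filter fun i => i ∈ I ∧ η i = true).card

/-- number of ones outside `I` -/
def outOnes (I : Finset (Fin n)) (η : Fin n → Bool) : ℕ :=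
  (univ.filter fun i => i ∉ I ∧ η i = true).card

lemma CU_wt_split (I : Finset (Fin n)) (η : Fin n → Bool) :
    wt η = inOnes I η + outOnes I η :=
  CU_card_filter_split (fun i => i ∈ I) (fun i => η i = true)

lemma CU_card_not_mem (I : Finset (Fin n)) :
    (univ.filter fun i => i ∉ I).card = n - I.card := by
  have h := card_filter_add_card_filter_not (s := (univ : Finset (Fin n)))
    (p := fun i => i ∈ I)
  have h2 : univ.filter (fun i => i ∈ I) = I := by
    ext i; simp
  rw [h2] at h
  have h3 : (univ : Finset (Fin n)).card = n := by simp
  omega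

lemma CU_outOnes_flip (I : Finset (Fin n)) (η : Fin n → Bool) :
    outOnes I η + outOnes I (flipOutside I η) = n - I.card := by
  have h2 : outOnes I (flipOutside I η)
      = (univ.filter fun i => ¬ (η i = true) ∧ i ∉ I).card := by
    unfold outOnes
    apply congrArg card
    apply filter_congr
    intro i _
    by_cases hi : i ∈ I <;> simp [flipOutside, hi] <;> tauto
  have h1 : outOnes I η = (univ.filter fun i => (η i = true) ∧ i ∉ I).card := by
    unfold outOnes
    apply congrArg card
    apply filter_congr
    intro i _
    tauto
  rw [h1, h2, ← CU_card_not_mem I, CU_card_filter_split (fun i => η i = true) (fun i => i ∉ I)]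

lemma CU_inOnes_congr {I : Finset (Fin n)} {η η' : Fin n → Bool}
    (h : ∀ i ∈ I, η i = η' i) : inOnes I η = inOnes I η' := by
  unfold inOnes
  apply congrArg card
  apply filter_congr
  intro i _
  constructor
  · rintro ⟨hi, hv⟩; exact ⟨hi, by rw [← h i hi]; exact hv⟩
  · rintro ⟨hi, hv⟩; exact ⟨hi, by rw [h i hi]; exact hv⟩

/-- the slice of the cube of weight `m` -/
def sl (n m : ℕ) : Finset (Fin n → Bool) := univ.filter fun η => wt η = m

lemma CU_rankSeq_sl (μ : (Fin n → Bool) → ℝ) (m : ℕ) :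
    rankSeq μ m = ∑ η ∈ sl n m, μ η := rfl

lemma CU_sl_card (m : ℕ) : (sl n m).card = n.choose m := by
  classical
  have := card_nbij' (s := sl n m) (t := (univ : Finset (Fin n)).powersetCard m)
    (fun η => univ.filter fun i => η i = true)
    (fun S i => if i ∈ S then true else false)
    (fun η hη => by
      simp only [sl, mem_coe, mem_filter, mem_univ, true_and] at hη
      rw [mem_coe, mem_powersetCard]
      exact ⟨filter_subset _ _ |>.trans (by simp), hη⟩)
    (fun S hS => by
      rw [mem_coe, mem_powersetCard] at hS
      simp only [sl, mem_coe, mem_filter, mem_univ, true_and]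
      rw [← hS.2]
      unfold wt
      apply congrArg card
      ext i
      by_cases hi : i ∈ S <;> simp [hi])
    (fun η hη => by
      funext i
      by_cases hi : η i = true <;> simp [hi])
    (fun S hS => by
      ext i
      by_cases hi : i ∈ S <;> simp [hi])
  rw [this, card_powersetCard, card_univ, Fintype.card_fin]

end Aux
section Aux2
variable {n : ℕ}

/-- unnormalized antipodal-pair correlation sum -/
noncomputable def Usum (μ : (Fin n → Bool) → ℝ) (I : Finset (Fin n)) (ξ : Fin n → Bool)
    (j : ℕ) : ℝ :=
  ∑ η ∈ univ.filter (fun η : Fin n → Bool =>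
      (∀ i ∈ I, η i = ξ i) ∧ (univ.filter fun i => i ∉ I ∧ η i = true).card = j),
    μ η * μ (flipOutside I η)

lemma CU_capp_U (μ : (Fin n → Bool) → ℝ) (hpos : ∀ η, 0 ≤ μ η)
    (hCAPP : ∀ k, 1 ≤ k → 2 * k ≤ n →
      ∀ I : Finset (Fin n), I.card = n - 2 * k → ∀ ξ : Fin n → Bool,
        0 < condZ μ I ξ → condGamma μ I ξ (k - 1) ≤ condGamma μ I ξ k)
    {k : ℕ} (I : Finset (Fin n)) (ξ : Fin n → Bool)
    (hk : 1 ≤ k) (hkn : 2 * k ≤ n) (hI : I.card = n - 2 * k) :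
    ((k : ℝ) + 1) * Usum μ I ξ (k - 1) ≤ (k : ℝ) * Usum μ I ξ k := by
  classical
  have hDc : n - I.card = 2 * k := by omega
  by_cases hZ : 0 < condZ μ I ξ
  · have h := hCAPP k hk hkn I hI ξ hZ
    set Z := condZ μ I ξ with hZdef
    have hZ0 : Z ≠ 0 := ne_of_gt hZ
    have hZZ : (0:ℝ) < Z * Z := mul_pos hZ hZ
    have hU : ∀ j, (∑ η ∈ univ.filter (fun η : Fin n → Bool =>
        (∀ i ∈ I, η i = ξ i) ∧ (univ.filter fun i => i ∉ I ∧ η i = true).card = j),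
          (μ η / Z) * (μ (flipOutside I η) / Z)) = Usum μ I ξ j / (Z * Z) := by
      intro j
      rw [Usum, sum_div]
      exact sum_congr rfl fun η _ => div_mul_div_comm _ _ _ _
    unfold condGamma at h
    rw [hDc, ← hZdef, hU, hU] at h
    set C1 := ((2*k).choose (k-1) : ℝ) with hC1def
    set C2 := ((2*k).choose k : ℝ) with hC2def
    have hC1pos : (0:ℝ) < C1 := by
      rw [hC1def]; exact_mod_cast Nat.choose_pos (by omega)
    have hC2pos : (0:ℝ) < C2 := by
      rw [hC2def]; exact_mod_cast Nat.choose_pos (by omega)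
    have key : C2 * (k : ℝ) = C1 * ((k : ℝ) + 1) := by
      have h0 := Nat.choose_succ_right_eq (2*k) (k-1)
      rw [Nat.sub_add_cancel hk] at h0
      have h2 : 2*k - (k-1) = k + 1 := by omega
      rw [h2] at h0
      rw [hC1def, hC2def]
      exact_mod_cast h0
    -- from h : C1⁻¹ * (U₋/(Z*Z)) ≤ C2⁻¹ * (Uk/(Z*Z))
    set U1 := Usum μ I ξ (k-1)
    set U2 := Usum μ I ξ k
    have h2 : C2 * U1 ≤ C1 * U2 := by
      have e1 : C1⁻¹ * (U1/(Z*Z)) = (C1⁻¹ * U1) / (Z*Z) := by ring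
      have e2 : C2⁻¹ * (U2/(Z*Z)) = (C2⁻¹ * U2) / (Z*Z) := by ring
      rw [e1, e2, div_le_div_iff_of_pos_right hZZ] at h
      rw [inv_mul_eq_div, inv_mul_eq_div] at h
      have := (div_le_div_iff₀ hC1pos hC2pos).mp h
      linarith
    have h4 : C1 * (((k:ℝ)+1) * U1) ≤ C1 * ((k:ℝ) * U2) := by
      have e3 : C1 * (((k:ℝ)+1) * U1) = (k:ℝ) * (C2 * U1) := by
        rw [show C1 * (((k:ℝ)+1) * U1) = (C1 * ((k:ℝ)+1)) * U1 by ring, ← key]; ring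
      have e4 : (k:ℝ) * (C1 * U2) = C1 * ((k:ℝ) * U2) := by ring
      rw [e3, ← e4]
      exact mul_le_mul_of_nonneg_left h2 (by positivity)
    exact le_of_mul_le_mul_left h4 hC1pos
  · -- condZ = 0 case
    have hZnn : 0 ≤ condZ μ I ξ := sum_nonneg fun η _ => hpos η
    have hZ0 : condZ μ I ξ = 0 := le_antisymm (not_lt.mp hZ) hZnn
    have hall : ∀ η ∈ univ.filter (fun η : Fin n → Bool => ∀ i ∈ I, η i = ξ i), μ η = 0 := by
      intro η hη
      have hle : μ η ≤ condZ μ I ξ := single_le_sum (fun i _ => hpos i) hη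
      exact le_antisymm (by rw [hZ0] at hle; exact hle) (hpos η)
    have hU0 : ∀ j, Usum μ I ξ j = 0 := by
      intro j
      apply sum_eq_zero
      intro η hη
      simp only [mem_filter, mem_univ, true_and] at hη
      have : μ η = 0 := hall η (by simp only [mem_filter, mem_univ, true_and]; exact hη.1)
      rw [this, zero_mul]
    rw [hU0, hU0]
    simp

/-- excess of `p.1` over `p.2` -/
def khd (p : (Fin n → Bool) × (Fin n → Bool)) : ℕ :=
  (univ.filter fun i => p.1 i = true ∧ p.2 i = false).card

/-- agreement set -/
def agr (p : (Fin n → Bool) × (Fin n → Bool)) : Finset (Fin n) :=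
  univ.filter fun i => p.1 i = p.2 i

/-- restriction of `η` to `I`, zero outside -/
def mask (I : Finset (Fin n)) (η : Fin n → Bool) : Fin n → Bool :=
  fun i => if i ∈ I then η i else false

def keyF (p : (Fin n → Bool) × (Fin n → Bool)) : Finset (Fin n) × (Fin n → Bool) :=
  (agr p, mask (agr p) p.1)

lemma CU_khd_symm {η η' : Fin n → Bool} (h : wt η = wt η') :
    khd (η, η') = khd (η', η) := by
  have a1 := CU_card_filter_split (fun i => η' i = true) (fun i => η i = true)
  have a2 := CU_card_filter_split (fun i => η i = true) (fun i => η' i = true)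
  have e1 : khd (η, η') = (univ.filter fun i => ¬ (η' i = true) ∧ η i = true).card := by
    unfold khd
    apply congrArg card
    apply filter_congr
    intro i _
    simp only []
    constructor
    · rintro ⟨h1, h2⟩; exact ⟨by simp [h2], h1⟩
    · rintro ⟨h1, h2⟩; exact ⟨h2, by simpa using h1⟩
  have e2 : khd (η', η) = (univ.filter fun i => ¬ (η i = true) ∧ η' i = true).card := by
    unfold khd
    apply congrArg card
    apply filter_congr
    intro i _
    simp only []
    constructor
    · rintro ⟨h1, h2⟩; exact ⟨by simp [h2], h1⟩
    · rintro ⟨h1, h2⟩; exact ⟨h2, by simpa using h1⟩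
  have e3 : (univ.filter fun i => η' i = true ∧ η i = true).card
      = (univ.filter fun i => η i = true ∧ η' i = true).card := by
    apply congrArg card; apply filter_congr; intro i _; constructor <;> (rintro ⟨u,v⟩; exact ⟨v,u⟩)
  unfold wt at h
  rw [e1, e2]
  omega

lemma CU_two_khd {η η' : Fin n → Bool} (h : wt η = wt η') :
    2 * khd (η, η') = (univ.filter fun i => ¬ (η i = η' i)).card := by
  have a := CU_card_filter_split (fun i => η i = true) (fun i => ¬ (η i = η' i))
  have e1 : (univ.filter fun i => (η i = true) ∧ ¬ (η i = η' i)).card = khd (η, η') := by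
    apply congrArg card; apply filter_congr; intro i _
    show _ ↔ (η i = true ∧ η' i = false)
    constructor
    · rintro ⟨h1, h2⟩
      refine ⟨h1, ?_⟩
      cases hh : η' i
      · rfl
      · exact absurd (h1.trans hh.symm) h2
    · rintro ⟨h1, h2⟩
      exact ⟨h1, by rw [h1, h2]; simp⟩
  have e2 : (univ.filter fun i => ¬ (η i = true) ∧ ¬ (η i = η' i)).card = khd (η', η) := by
    apply congrArg card; apply filter_congr; intro i _
    show _ ↔ (η' i = true ∧ η i = false)
    constructor
    · rintro ⟨h1, h2⟩
      have hη : η i = false := by cases hh : η i; rfl; exact absurd hh h1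
      have hη' : η' i = true := by
        cases hh : η' i
        · exact absurd (hη.trans hh.symm) h2
        · rfl
      exact ⟨hη', hη⟩
    · rintro ⟨h1, h2⟩
      constructor
      · rw [h2]; simp
      · rw [h2, h1]; simp
  have hs := CU_khd_symm h
  omega

end Aux2
section Aux3
variable {n : ℕ}

lemma CU_bool_ne {a b : Bool} (h : ¬ (a = b)) : b = !a := by
  cases a <;> cases b <;> simp_all

lemma CU_flip_mem {I : Finset (Fin n)} {η : Fin n → Bool} {i : Fin n} (hi : i ∈ I) :
    flipOutside I η i = η i := by simp [flipOutside, hi]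

lemma CU_flip_not_mem {I : Finset (Fin n)} {η : Fin n → Bool} {i : Fin n} (hi : i ∉ I) :
    flipOutside I η i = !η i := by simp [flipOutside, hi]

lemma CU_agr_flip (I : Finset (Fin n)) (η : Fin n → Bool) :
    agr (η, flipOutside I η) = I := by
  ext i
  simp only [agr, mem_filter, mem_univ, true_and]
  by_cases hi : i ∈ I
  · simp [CU_flip_mem hi, hi]
  · simp only [CU_flip_not_mem hi, hi, iff_false]
    cases η i <;> simp

lemma CU_khd_flip (I : Finset (Fin n)) (η : Fin n → Bool) :
    khd (η, flipOutside I η) = outOnes I η := by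
  unfold khd outOnes
  apply congrArg card
  apply filter_congr
  intro i _
  show (η i = true ∧ flipOutside I η i = false) ↔ _
  by_cases hi : i ∈ I
  · simp only [CU_flip_mem hi, hi]
    constructor
    · rintro ⟨h1, h2⟩; rw [h1] at h2; exact absurd h2 (by simp)
    · rintro ⟨h1, _⟩; exact absurd trivial h1
  · simp only [CU_flip_not_mem hi, hi]
    cases η i <;> simp

lemma CU_snd_eq_flip {I : Finset (Fin n)} {p : (Fin n → Bool) × (Fin n → Bool)}
    (hagr : agr p = I) : p.2 = flipOutside I p.1 := by
  funext i
  by_cases hi : i ∈ I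
  · rw [CU_flip_mem hi]
    have : i ∈ agr p := by rw [hagr]; exact hi
    simp only [agr, mem_filter, mem_univ, true_and] at this
    exact this.symm
  · rw [CU_flip_not_mem hi]
    have : i ∉ agr p := by rw [hagr]; exact hi
    simp only [agr, mem_filter, mem_univ, true_and] at this
    exact CU_bool_ne this

lemma CU_fiber_sum (μ : (Fin n → Bool) → ℝ) (I : Finset (Fin n)) (ξ : Fin n → Bool)
    (hξ : ∀ i ∉ I, ξ i = false)
    (j w₁ w₂ : ℕ) (hw₁ : w₁ = inOnes I ξ + j) (hw₂ : w₂ = inOnes I ξ + ((n - I.card) - j))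
    (hj : j ≤ n - I.card) :
    ∑ p ∈ ((sl n w₁) ×ˢ (sl n w₂)).filter (fun p => keyF p = (I, ξ)), μ p.1 * μ p.2
      = Usum μ I ξ j := by
  classical
  apply sum_nbij' (i := fun p => p.1) (j := fun η => (η, flipOutside I η))
  · -- maps into Ej
    intro p hp
    simp only [mem_filter, mem_product, sl, mem_univ, true_and] at hp
    obtain ⟨⟨h1, h2⟩, hkey⟩ := hp
    have hagr : agr p = I := by
      have := congrArg Prod.fst hkey; simpa [keyF] using this
    have hmask : mask I p.1 = ξ := by
      have := congrArg Prod.snd hkey; rw [keyF] at this; rw [hagr] at this; exact this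
    have hagree : ∀ i ∈ I, p.1 i = ξ i := by
      intro i hi
      rw [← hmask]; simp [mask, hi]
    have hio : inOnes I p.1 = inOnes I ξ := CU_inOnes_congr hagree
    have hsplit := CU_wt_split I p.1
    simp only [mem_filter, mem_univ, true_and]
    refine ⟨hagree, ?_⟩
    show outOnes I p.1 = j
    omega
  · -- maps back
    intro η hη
    simp only [mem_filter, mem_univ, true_and] at hη
    obtain ⟨hagree, hout⟩ := hη
    have hout' : outOnes I η = j := hout
    have hio : inOnes I η = inOnes I ξ := CU_inOnes_congr hagree
    have hioflip : inOnes I (flipOutside I η) = inOnes I η :=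
      CU_inOnes_congr (fun i hi => CU_flip_mem (η := η) hi)
    have hofl := CU_outOnes_flip I η
    have hsplit1 := CU_wt_split I η
    have hsplit2 := CU_wt_split I (flipOutside I η)
    have hagrf := CU_agr_flip I η
    simp only [mem_filter, mem_product, sl, mem_univ, true_and]
    refine ⟨⟨by omega, by omega⟩, ?_⟩
    unfold keyF
    rw [hagrf]
    refine Prod.ext rfl ?_
    show mask I η = ξ
    funext i
    by_cases hi : i ∈ I
    · simp only [mask, hi, if_true]; exact hagree i hi
    · simp only [mask, hi, if_false]; exact (hξ i hi).symm
  · -- left inverse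
    intro p hp
    simp only [mem_filter, mem_product, sl, mem_univ, true_and] at hp
    have hagr : agr p = I := by
      have := congrArg Prod.fst hp.2; simpa [keyF] using this
    exact (Prod.ext rfl (CU_snd_eq_flip hagr).symm)
  · intro η hη; rfl
  · -- values
    intro p hp
    simp only [mem_filter, mem_product, sl, mem_univ, true_and] at hp
    have hagr : agr p = I := by
      have := congrArg Prod.fst hp.2; simpa [keyF] using this
    rw [← CU_snd_eq_flip hagr]

lemma CU_fiber_le (μ : (Fin n → Bool) → ℝ) (hpos : ∀ η, 0 ≤ μ η)
    (hCAPP : ∀ k, 1 ≤ k → 2 * k ≤ n →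
      ∀ I : Finset (Fin n), I.card = n - 2 * k → ∀ ξ : Fin n → Bool,
        0 < condZ μ I ξ → condGamma μ I ξ (k - 1) ≤ condGamma μ I ξ k)
    (m : ℕ) (hm : 1 ≤ m) (κ : Finset (Fin n) × (Fin n → Bool)) :
    ∑ p ∈ ((sl n (m-1)) ×ˢ (sl n (m+1))).filter (fun p => keyF p = κ), μ p.1 * μ p.2
      ≤ ∑ p ∈ ((sl n m) ×ˢ (sl n m)).filter (fun p => keyF p = κ),
          ((khd p : ℝ)/((khd p : ℝ) + 1)) * (μ p.1 * μ p.2) := by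
  classical
  have hRHSnn : ∀ p ∈ ((sl n m) ×ˢ (sl n m)).filter (fun p => keyF p = κ),
      0 ≤ ((khd p : ℝ)/((khd p : ℝ) + 1)) * (μ p.1 * μ p.2) := by
    intro p _
    apply mul_nonneg
    · apply div_nonneg (Nat.cast_nonneg _); positivity
    · exact mul_nonneg (hpos _) (hpos _)
  rcases eq_empty_or_nonempty (((sl n (m-1)) ×ˢ (sl n (m+1))).filter (fun p => keyF p = κ)) with
    he | ⟨p₀, hp₀⟩
  · rw [he, sum_empty]
    exact sum_nonneg hRHSnn
  · obtain ⟨I, ξ⟩ := κ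
    simp only [mem_filter, mem_product, sl, mem_univ, true_and] at hp₀
    obtain ⟨⟨hw1, hw2⟩, hkey⟩ := hp₀
    have hagr : agr p₀ = I := by
      have := congrArg Prod.fst hkey; simpa [keyF] using this
    have hmask : mask I p₀.1 = ξ := by
      have := congrArg Prod.snd hkey; rw [keyF] at this; rw [hagr] at this; exact this
    have hξ : ∀ i ∉ I, ξ i = false := by
      intro i hi; rw [← hmask]; simp [mask, hi]
    have hagree : ∀ i ∈ I, p₀.1 i = ξ i := by
      intro i hi; rw [← hmask]; simp [mask, hi]
    have hio : inOnes I p₀.1 = inOnes I ξ := CU_inOnes_congr hagree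
    have hflip : p₀.2 = flipOutside I p₀.1 := CU_snd_eq_flip hagr
    have hioflip : inOnes I p₀.2 = inOnes I p₀.1 := by
      rw [hflip]; exact CU_inOnes_congr (fun i hi => CU_flip_mem (η := p₀.1) hi)
    have hofl : outOnes I p₀.1 + outOnes I p₀.2 = n - I.card := by
      rw [hflip]; exact CU_outOnes_flip I p₀.1
    have hsplit1 := CU_wt_split I p₀.1
    have hsplit2 := CU_wt_split I p₀.2
    have hcardI : I.card ≤ n := by
      have := card_le_univ I
      simpa using this
    set c₁ := inOnes I ξ with hc₁
    set u := outOnes I p₀.1 with hu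
    set k := u + 1 with hk
    have hDc : n - I.card = 2 * k := by omega
    have hmk : m = c₁ + k := by omega
    have hf1 : ∑ p ∈ ((sl n (m-1)) ×ˢ (sl n (m+1))).filter (fun p => keyF p = (I, ξ)),
        μ p.1 * μ p.2 = Usum μ I ξ (k-1) := by
      apply CU_fiber_sum μ I ξ hξ (k-1) (m-1) (m+1) (by omega) (by omega) (by omega)
    have hf2 : ∑ p ∈ ((sl n m) ×ˢ (sl n m)).filter (fun p => keyF p = (I, ξ)),
        μ p.1 * μ p.2 = Usum μ I ξ k := by
      apply CU_fiber_sum μ I ξ hξ k m m (by omega) (by omega) (by omega)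
    -- coefficient is constant k/(k+1) on the right fiber
    have hcoef : ∀ p ∈ ((sl n m) ×ˢ (sl n m)).filter (fun p => keyF p = (I, ξ)),
        ((khd p : ℝ)/((khd p : ℝ) + 1)) * (μ p.1 * μ p.2)
          = ((k : ℝ)/((k : ℝ) + 1)) * (μ p.1 * μ p.2) := by
      intro p hp
      simp only [mem_filter, mem_product, sl, mem_univ, true_and] at hp
      obtain ⟨⟨g1, g2⟩, gkey⟩ := hp
      have gagr : agr p = I := by
        have := congrArg Prod.fst gkey; simpa [keyF] using this
      have gmask : mask I p.1 = ξ := by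
        have := congrArg Prod.snd gkey; rw [keyF] at this; rw [gagr] at this; exact this
      have gagree : ∀ i ∈ I, p.1 i = ξ i := by
        intro i hi; rw [← gmask]; simp [mask, hi]
      have gio : inOnes I p.1 = c₁ := CU_inOnes_congr gagree
      have gflip : p.2 = flipOutside I p.1 := CU_snd_eq_flip gagr
      have gkh : khd p = outOnes I p.1 := by
        have : p = (p.1, flipOutside I p.1) := Prod.ext rfl gflip
        rw [this, CU_khd_flip]
      have gsplit := CU_wt_split I p.1
      have : khd p = k := by omega
      rw [this]
    rw [hf1, sum_congr rfl hcoef, ← mul_sum, hf2]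
    have hk1 : 1 ≤ k := by omega
    have hk2 : 2 * k ≤ n := by omega
    have hk3 : I.card = n - 2 * k := by omega
    have hcap := CU_capp_U (k := k) μ hpos hCAPP I ξ hk1 hk2 hk3
    rw [div_mul_eq_mul_div, le_div_iff₀ (by positivity)]
    linarith [hcap]
end Aux3
section Aux4
variable {n : ℕ}

lemma CU_S1_le_S2 (μ : (Fin n → Bool) → ℝ) (hpos : ∀ η, 0 ≤ μ η)
    (hCAPP : ∀ k, 1 ≤ k → 2 * k ≤ n →
      ∀ I : Finset (Fin n), I.card = n - 2 * k → ∀ ξ : Fin n → Bool,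
        0 < condZ μ I ξ → condGamma μ I ξ (k - 1) ≤ condGamma μ I ξ k)
    (m : ℕ) (hm : 1 ≤ m) :
    ∑ p ∈ (sl n (m-1)) ×ˢ (sl n (m+1)), μ p.1 * μ p.2
      ≤ ∑ p ∈ (sl n m) ×ˢ (sl n m), ((khd p : ℝ)/((khd p : ℝ)+1)) * (μ p.1 * μ p.2) := by
  classical
  rw [← sum_fiberwise_of_maps_to (g := keyF)
    (t := (univ : Finset (Finset (Fin n) × (Fin n → Bool))))
    (fun p _ => mem_univ (keyF p)) (fun p => μ p.1 * μ p.2)]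
  rw [← sum_fiberwise_of_maps_to (g := keyF)
    (t := (univ : Finset (Finset (Fin n) × (Fin n → Bool))))
    (fun p _ => mem_univ (keyF p))
    (fun p => ((khd p : ℝ)/((khd p : ℝ)+1)) * (μ p.1 * μ p.2))]
  exact sum_le_sum fun κ _ => CU_fiber_le μ hpos hCAPP m hm κ

lemma CU_wt_le (η : Fin n → Bool) : wt η ≤ n := by
  unfold wt
  calc (univ.filter fun i => η i = true).card ≤ (univ : Finset (Fin n)).card :=
        card_filter_le _ _
    _ = n := by simp

lemma CU_count_dist (m k : ℕ) {η : Fin n → Bool} (hη : wt η = m) :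
    ((sl n m).filter (fun η' => khd (η, η') = k)).card
      = m.choose k * (n - m).choose k := by
  classical
  set S := univ.filter (fun i => η i = true) with hSdef
  set T := univ.filter (fun i => ¬ (η i = true)) with hTdef
  have hmn : m ≤ n := hη ▸ CU_wt_le η
  have hS : S.card = m := hη
  have hT : T.card = n - m := by
    have h := card_filter_add_card_filter_not (s := (univ : Finset (Fin n)))
      (p := fun i => η i = true)
    have h3 : (univ : Finset (Fin n)).card = n := by simp
    rw [← hSdef, ← hTdef] at h
    omega
  have hmemS : ∀ x, x ∈ S ↔ η x = true := fun x => by simp [hSdef]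
  have hmemT : ∀ x, x ∈ T ↔ η x = false := fun x => by
    simp [hTdef]
  have key := card_nbij'
    (s := (sl n m).filter (fun η' => khd (η, η') = k))
    (t := (S.powersetCard k) ×ˢ (T.powersetCard k))
    (fun η' => (univ.filter (fun x => η x = true ∧ η' x = false),
                univ.filter (fun x => η x = false ∧ η' x = true)))
    (fun AB => fun x => if x ∈ AB.1 then false else if x ∈ AB.2 then true else η x)
    (by -- forward maps
      intro η' hη'
      simp only [mem_coe, mem_filter, sl, mem_univ, true_and] at hη'
      obtain ⟨hw, hkd⟩ := hη'
      rw [mem_coe, mem_product, mem_powersetCard, mem_powersetCard]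
      refine ⟨⟨?_, ?_⟩, ?_, ?_⟩
      · intro x hx
        rw [mem_filter] at hx
        rw [hmemS]
        exact hx.2.1
      · have : (univ.filter (fun x => η x = true ∧ η' x = false)).card = khd (η, η') := rfl
        rw [this, hkd]
      · intro x hx
        rw [mem_filter] at hx
        rw [hmemT]
        exact hx.2.1
      · show (univ.filter (fun x => η x = false ∧ η' x = true)).card = k
        have e : (univ.filter (fun x => η x = false ∧ η' x = true))
            = univ.filter (fun x => η' x = true ∧ η x = false) := by
          apply filter_congr; intro x _; constructor <;> (rintro ⟨u,v⟩; exact ⟨v,u⟩)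
        rw [e]
        have : (univ.filter (fun x => η' x = true ∧ η x = false)).card = khd (η', η) := rfl
        rw [this, CU_khd_symm (hw.trans hη.symm) , hkd])
    (by -- backward maps
      intro AB hAB
      rw [mem_coe, mem_product, mem_powersetCard, mem_powersetCard] at hAB
      obtain ⟨⟨hAS, hAk⟩, hBT, hBk⟩ := hAB
      set A := AB.1
      set B := AB.2
      set η'' := fun x => if x ∈ A then false else if x ∈ B then true else η x with hη''
      have hmemA : ∀ x ∈ A, η x = true := fun x hx => (hmemS x).mp (hAS hx)
      have hmemB : ∀ x ∈ B, η x = false := fun x hx => (hmemT x).mp (hBT hx)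
      have hdisj : ∀ x ∈ B, x ∉ A := by
        intro x hx hA
        have := hmemA x hA; have := hmemB x hx; simp_all
      have hkle : k ≤ m := by rw [← hS, ← hAk]; exact card_le_card hAS
      have hwt : wt η'' = m := by
        have hsplit := CU_card_filter_split (fun x => x ∈ B) (fun x => η'' x = true)
        have c1 : univ.filter (fun x => x ∈ B ∧ η'' x = true) = B := by
          ext x
          simp only [mem_filter, mem_univ, true_and]
          constructor
          · rintro ⟨hx, _⟩; exact hx
          · intro hx
            refine ⟨hx, ?_⟩
            rw [hη'']
            simp only [if_neg (hdisj x hx), if_pos hx]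
        have c2 : univ.filter (fun x => ¬ (x ∈ B) ∧ η'' x = true)
            = univ.filter (fun x => ¬ (x ∈ A) ∧ η x = true) := by
          apply filter_congr; intro x _
          constructor
          · rintro ⟨hxB, hxv⟩
            by_cases hxA : x ∈ A
            · rw [hη''] at hxv; simp only [if_pos hxA] at hxv; exact absurd hxv (by simp)
            · rw [hη''] at hxv; simp only [if_neg hxA, if_neg hxB] at hxv; exact ⟨hxA, hxv⟩
          · rintro ⟨hxA, hxv⟩
            have hxB : x ∉ B := by
              intro hxB; rw [hmemB x hxB] at hxv; exact absurd hxv (by simp)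
            refine ⟨hxB, ?_⟩
            rw [hη'']
            simp only [if_neg hxA, if_neg hxB]
            exact hxv
        have hsplit2 := CU_card_filter_split (fun x => x ∈ A) (fun x => η x = true)
        have c3 : univ.filter (fun x => x ∈ A ∧ η x = true) = A := by
          ext x
          simp only [mem_filter, mem_univ, true_and]
          exact ⟨fun h => h.1, fun hx => ⟨hx, hmemA x hx⟩⟩
        have hwtη : (univ.filter (fun x => η x = true)).card = m := hη
        unfold wt
        rw [hsplit, c1, c2]
        rw [hwtη, c3, hAk] at hsplit2
        omega
      have hkd : khd (η, η'') = k := by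
        have : univ.filter (fun x => η x = true ∧ η'' x = false) = A := by
          ext x
          simp only [mem_filter, mem_univ, true_and]
          constructor
          · rintro ⟨hx1, hx2⟩
            by_cases hxA : x ∈ A
            · exact hxA
            · exfalso
              have hxB : x ∉ B := by
                intro hxB; rw [hmemB x hxB] at hx1; exact absurd hx1 (by simp)
              rw [hη''] at hx2
              simp only [if_neg hxA, if_neg hxB] at hx2
              rw [hx1] at hx2; exact absurd hx2 (by simp)
          · intro hxA
            refine ⟨hmemA x hxA, ?_⟩
            rw [hη'']; simp only [if_pos hxA]
        have e : khd (η, η'') = (univ.filter (fun x => η x = true ∧ η'' x = false)).card := rfl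
        rw [e, this, hAk]
      simp only [mem_coe, mem_filter, sl, mem_univ, true_and]
      exact ⟨hwt, hkd⟩)
    (by -- j (i η') = η'
      intro η' hη'
      funext x
      dsimp only
      by_cases hxA : x ∈ univ.filter (fun x => η x = true ∧ η' x = false)
      · rw [if_pos hxA]
        rw [mem_filter] at hxA
        exact hxA.2.2.symm
      · rw [if_neg hxA]
        by_cases hxB : x ∈ univ.filter (fun x => η x = false ∧ η' x = true)
        · rw [if_pos hxB]
          rw [mem_filter] at hxB
          exact hxB.2.2.symm
        · rw [if_neg hxB]
          rw [mem_filter] at hxA hxB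
          simp only [mem_univ, true_and] at hxA hxB
          cases hx : η x <;> cases hx' : η' x <;> simp_all)
    (by -- i (j AB) = AB
      intro AB hAB
      rw [mem_coe, mem_product, mem_powersetCard, mem_powersetCard] at hAB
      obtain ⟨⟨hAS, hAk⟩, hBT, hBk⟩ := hAB
      set A := AB.1
      set B := AB.2
      have hmemA : ∀ x ∈ A, η x = true := fun x hx => (hmemS x).mp (hAS hx)
      have hmemB : ∀ x ∈ B, η x = false := fun x hx => (hmemT x).mp (hBT hx)
      have hdisj : ∀ x ∈ B, x ∉ A := by
        intro x hx hA
        have := hmemA x hA; have := hmemB x hx; simp_all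
      have e1 : univ.filter (fun x => η x = true ∧
          (if x ∈ A then false else if x ∈ B then true else η x) = false) = A := by
        ext x
        simp only [mem_filter, mem_univ, true_and]
        constructor
        · rintro ⟨hx1, hx2⟩
          by_cases hxA : x ∈ A
          · exact hxA
          · exfalso
            have hxB : x ∉ B := by
              intro hxB; rw [hmemB x hxB] at hx1; exact absurd hx1 (by simp)
            simp only [if_neg hxA, if_neg hxB] at hx2
            rw [hx1] at hx2; exact absurd hx2 (by simp)
        · intro hxA
          exact ⟨hmemA x hxA, by simp only [if_pos hxA]⟩
      have e2 : univ.filter (fun x => η x = false ∧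
          (if x ∈ A then false else if x ∈ B then true else η x) = true) = B := by
        ext x
        simp only [mem_filter, mem_univ, true_and]
        constructor
        · rintro ⟨hx1, hx2⟩
          by_cases hxB : x ∈ B
          · exact hxB
          · exfalso
            have hxA : x ∉ A := by
              intro hxA; rw [hmemA x hxA] at hx1; exact absurd hx1 (by simp)
            simp only [if_neg hxA, if_neg hxB] at hx2
            rw [hx1] at hx2; exact absurd hx2 (by simp)
        · intro hxB
          exact ⟨hmemB x hxB, by simp only [if_neg (hdisj x hxB), if_pos hxB]⟩
      exact Prod.ext e1 e2)
  rw [key, card_product, card_powersetCard, card_powersetCard, hS, hT]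

lemma CU_khd_le {m : ℕ} {η η' : Fin n → Bool} (hη : wt η = m) :
    khd (η, η') ≤ m := by
  unfold khd
  rw [← hη]
  unfold wt
  apply card_le_card
  intro x hx
  rw [mem_filter] at hx ⊢
  exact ⟨hx.1, hx.2.1⟩

lemma CU_rowsum (m : ℕ) (s : ℝ) {η : Fin n → Bool} (hη : wt η = m) :
    ∑ η' ∈ sl n m, s ^ (2 * khd (η, η'))
      = ∑ k ∈ range (m+1), ((m.choose k * (n - m).choose k : ℕ) : ℝ) * s ^ (2*k) := by
  classical
  have hmaps : ∀ η' ∈ sl n m, khd (η, η') ∈ range (m+1) := by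
    intro η' _
    rw [mem_range]
    have := CU_khd_le (η' := η') hη
    omega
  rw [← sum_fiberwise_of_maps_to hmaps (fun η' => s ^ (2 * khd (η, η')))]
  apply sum_congr rfl
  intro k hk
  have hcg : ∀ η' ∈ (sl n m).filter (fun η' => khd (η, η') = k),
      s ^ (2 * khd (η, η')) = s ^ (2*k) := by
    intro η' h
    rw [(mem_filter.mp h).2]
  rw [sum_congr rfl hcg, sum_const, CU_count_dist m k hη, nsmul_eq_mul]

end Aux4
section Aux5
variable {n : ℕ}

/-- sign character -/
def CU_eps : Bool → ℝ := fun b => if b then -1 else 1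

/-- Fourier character -/
def CU_chi (t : Finset (Fin n)) (η : Fin n → Bool) : ℝ := ∏ i ∈ t, CU_eps (η i)

lemma CU_pow_eq_prod {s : ℝ} {m : ℕ} {η η' : Fin n → Bool} (hη : wt η = m) (hη' : wt η' = m) :
    s ^ (2 * khd (η, η'))
      = ∏ i : Fin n, ((1-s)/2 * (CU_eps (η i) * CU_eps (η' i)) + (1+s)/2) := by
  have hd := CU_two_khd (hη.trans hη'.symm)
  rw [hd]
  have e1 : ∀ i : Fin n, ((1-s)/2 * (CU_eps (η i) * CU_eps (η' i)) + (1+s)/2)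
      = (if η i = η' i then (1:ℝ) else s) := by
    intro i; cases hh : η i <;> cases hh' : η' i <;> simp [CU_eps] <;> ring
  rw [prod_congr rfl (fun i _ => e1 i)]
  rw [← prod_filter_mul_prod_filter_not univ (fun i => η i = η' i)]
  rw [prod_congr rfl (fun i (hi : i ∈ univ.filter fun i => η i = η' i) =>
    if_pos ((mem_filter.mp hi).2)), prod_const_one, one_mul]
  rw [prod_congr rfl (fun i (hi : i ∈ univ.filter fun i => ¬ (η i = η' i)) =>
    if_neg ((mem_filter.mp hi).2)), prod_const]

lemma CU_psd (m : ℕ) (z : (Fin n → Bool) → ℝ) {s : ℝ} (h0 : 0 ≤ s) (h1 : s ≤ 1) :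
    0 ≤ ∑ η ∈ sl n m, ∑ η' ∈ sl n m, z η * z η' * s ^ (2 * khd (η, η')) := by
  classical
  have hexp : ∀ η ∈ sl n m, ∀ η' ∈ sl n m,
      z η * z η' * s ^ (2 * khd (η, η'))
        = ∑ t ∈ (univ : Finset (Fin n)).powerset,
            (((1-s)/2)^t.card * ((1+s)/2)^((univ \ t).card))
              * ((z η * CU_chi t η) * (z η' * CU_chi t η')) := by
    intro η hη η' hη'
    simp only [sl, mem_filter, mem_univ, true_and] at hη hη'
    rw [CU_pow_eq_prod hη hη']
    rw [prod_add]
    rw [mul_sum]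
    apply sum_congr rfl
    intro t _
    have hprodf : (∏ i ∈ t, ((1-s)/2 * (CU_eps (η i) * CU_eps (η' i))))
        = ((1-s)/2)^t.card * (CU_chi t η * CU_chi t η') := by
      rw [prod_mul_distrib, prod_const, prod_mul_distrib]
      rw [CU_chi, CU_chi]
    have hprodg : (∏ i ∈ univ \ t, ((1+s)/2)) = ((1+s)/2)^((univ \ t).card) := prod_const _
    rw [hprodf, hprodg]
    ring
  rw [sum_congr rfl (fun η hη => sum_congr rfl (fun η' hη' => hexp η hη η' hη'))]
  rw [sum_congr rfl (fun η (hη : η ∈ sl n m) => sum_comm (s := sl n m)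
    (t := (univ : Finset (Fin n)).powerset))]
  rw [sum_comm]
  apply sum_nonneg
  intro t _
  have e : ∑ η ∈ sl n m, ∑ η' ∈ sl n m,
      (((1-s)/2)^t.card * ((1+s)/2)^((univ \ t).card))
        * ((z η * CU_chi t η) * (z η' * CU_chi t η'))
      = (((1-s)/2)^t.card * ((1+s)/2)^((univ \ t).card))
        * ((∑ η ∈ sl n m, z η * CU_chi t η) * (∑ η ∈ sl n m, z η * CU_chi t η)) := by
    rw [sum_mul_sum, mul_sum]
    apply sum_congr rfl
    intro η _
    rw [mul_sum]
  rw [e]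
  apply mul_nonneg
  · apply mul_nonneg
    · exact pow_nonneg (div_nonneg (by linarith) (by norm_num)) _
    · exact pow_nonneg (div_nonneg (by linarith) (by norm_num)) _
  · exact mul_self_nonneg _

lemma CU_phi_ge (μ : (Fin n → Bool) → ℝ) (m : ℕ) (hmn : m ≤ n) {s : ℝ}
    (h0 : 0 ≤ s) (h1 : s ≤ 1) :
    (rankSeq μ m)^2 * (∑ k ∈ range (m+1), ((m.choose k * (n - m).choose k : ℕ) : ℝ) * s^(2*k))
      ≤ (n.choose m : ℝ) * ∑ η ∈ sl n m, ∑ η' ∈ sl n m, μ η * μ η' * s ^ (2 * khd (η, η')) := by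
  classical
  set N : ℝ := (n.choose m : ℝ) with hN
  have hNpos : (0:ℝ) < N := by
    rw [hN]; exact_mod_cast Nat.choose_pos hmn
  set r : ℝ := rankSeq μ m with hr
  set a : ℝ := r / N with ha
  set F : ℝ := ∑ k ∈ range (m+1), ((m.choose k * (n - m).choose k : ℕ) : ℝ) * s^(2*k) with hF
  set Φ : ℝ := ∑ η ∈ sl n m, ∑ η' ∈ sl n m, μ η * μ η' * s ^ (2 * khd (η, η')) with hΦ
  have hRS : ∀ η ∈ sl n m, ∑ η' ∈ sl n m, s ^ (2 * khd (η, η')) = F := by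
    intro η hη
    exact CU_rowsum m s ((mem_filter.mp hη).2)
  have hRS' : ∀ η' ∈ sl n m, ∑ η ∈ sl n m, s ^ (2 * khd (η, η')) = F := by
    intro η' hη'
    have hcg : ∀ η ∈ sl n m, s ^ (2 * khd (η, η')) = s ^ (2 * khd (η', η)) := by
      intro η hη
      rw [CU_khd_symm (((mem_filter.mp hη).2).trans ((mem_filter.mp hη').2).symm)]
    rw [sum_congr rfl hcg]
    exact CU_rowsum m s ((mem_filter.mp hη').2)
  have hpsd := CU_psd m (fun η => μ η - a) h0 h1
  have expand : ∀ η η' : Fin n → Bool,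
      (μ η - a) * (μ η' - a) * s ^ (2 * khd (η, η'))
        = μ η * μ η' * s ^ (2 * khd (η, η'))
          - a * (μ η * s ^ (2 * khd (η, η')))
          - a * (μ η' * s ^ (2 * khd (η, η')))
          + (a*a) * s ^ (2 * khd (η, η')) := fun η η' => by ring
  have hT2 : ∑ η ∈ sl n m, ∑ η' ∈ sl n m, a * (μ η * s ^ (2 * khd (η, η')))
      = a * (r * F) := by
    have hin : ∀ η ∈ sl n m, ∑ η' ∈ sl n m, a * (μ η * s ^ (2 * khd (η, η')))
        = a * (μ η * F) := by
      intro η hη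
      rw [← mul_sum, ← mul_sum, hRS η hη]
    rw [sum_congr rfl hin, ← mul_sum, ← sum_mul, ← CU_rankSeq_sl]
  have hT3 : ∑ η ∈ sl n m, ∑ η' ∈ sl n m, a * (μ η' * s ^ (2 * khd (η, η')))
      = a * (r * F) := by
    rw [sum_comm]
    have hin : ∀ η' ∈ sl n m, ∑ η ∈ sl n m, a * (μ η' * s ^ (2 * khd (η, η')))
        = a * (μ η' * F) := by
      intro η' hη'
      rw [← mul_sum, ← mul_sum, hRS' η' hη']
    rw [sum_congr rfl hin, ← mul_sum, ← sum_mul, ← CU_rankSeq_sl]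
  have hT4 : ∑ η ∈ sl n m, ∑ η' ∈ sl n m, (a*a) * s ^ (2 * khd (η, η'))
      = (a*a) * (N * F) := by
    have hin : ∀ η ∈ sl n m, ∑ η' ∈ sl n m, (a*a) * s ^ (2 * khd (η, η'))
        = (a*a) * F := by
      intro η hη
      rw [← mul_sum, hRS η hη]
    rw [sum_congr rfl hin, sum_const, CU_sl_card, nsmul_eq_mul]
    rw [hN]; ring
  have hsum4 : ∑ η ∈ sl n m, ∑ η' ∈ sl n m, (μ η - a) * (μ η' - a) * s ^ (2 * khd (η, η'))
      = Φ - a * (r*F) - a * (r*F) + (a*a) * (N*F) := by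
    have e1 : ∀ η ∈ sl n m, (∑ η' ∈ sl n m, (μ η - a) * (μ η' - a) * s ^ (2 * khd (η, η')))
        = (∑ η' ∈ sl n m, μ η * μ η' * s ^ (2 * khd (η, η')))
          - (∑ η' ∈ sl n m, a * (μ η * s ^ (2 * khd (η, η'))))
          - (∑ η' ∈ sl n m, a * (μ η' * s ^ (2 * khd (η, η'))))
          + (∑ η' ∈ sl n m, (a*a) * s ^ (2 * khd (η, η'))) := by
      intro η _
      rw [← sum_sub_distrib, ← sum_sub_distrib, ← sum_add_distrib]
      exact sum_congr rfl fun η' _ => expand η η'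
    rw [sum_congr rfl e1, sum_add_distrib, sum_sub_distrib, sum_sub_distrib, hT2, hT3, hT4, ← hΦ]
  rw [hsum4] at hpsd
  have haF : a * (r * F) = r^2 * F / N := by
    rw [ha]; field_simp
  have haF2 : (a*a) * (N * F) = r^2 * F / N := by
    rw [ha]; field_simp
  rw [haF, haF2] at hpsd
  have hΦge : r^2 * F / N ≤ Φ := by linarith
  calc r^2 * F = (r^2 * F / N) * N := by field_simp
    _ ≤ Φ * N := mul_le_mul_of_nonneg_right hΦge (le_of_lt hNpos)
    _ = N * Φ := mul_comm _ _

end Aux5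
section Aux6
variable {n : ℕ}

lemma CU_intble (c : ℝ) (j : ℕ) :
    IntervalIntegrable (fun s : ℝ => c * (2 * s^j)) MeasureTheory.volume 0 1 :=
  (Continuous.intervalIntegrable
    ((continuous_const.mul ((continuous_const.mul (continuous_pow j))))) 0 1)

lemma CU_integ (c : ℝ) (j : ℕ) :
    ∫ s in (0:ℝ)..1, c * (2 * s^(2*j+1)) = c * (1/((j:ℝ)+1)) := by
  rw [intervalIntegral.integral_const_mul, intervalIntegral.integral_const_mul, integral_pow]
  have h1 : ((2*j+1:ℕ):ℝ) + 1 = 2*((j:ℝ)+1) := by push_cast; ring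
  rw [h1, one_pow, zero_pow (by omega), sub_zero]
  have h2 : ((j:ℝ)+1) ≠ 0 := by positivity
  field_simp

lemma CU_vandermonde (m : ℕ) (hmn : m + 1 ≤ n) :
    ∑ k ∈ range (m+1), (m+1).choose (k+1) * (n - m).choose k = (n+1).choose m := by
  have hnm : m + 1 + (n - m) = n + 1 := by omega
  have h := Nat.add_choose_eq (m+1) (n-m) m
  rw [hnm] at h
  rw [Finset.Nat.sum_antidiagonal_eq_sum_range_succ
    (fun i j => (m+1).choose i * (n-m).choose j) m] at h
  rw [← sum_range_reflect] at h
  rw [h]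
  apply sum_congr rfl
  intro i hi
  rw [mem_range] at hi
  have hi' : i ≤ m := by omega
  have e1 : m + 1 - 1 - i = m - i := by omega
  have e2 : m - (m - i) = i := by omega
  have e3 : (m+1).choose (m - i) = (m+1).choose (i+1) := by
    have := Nat.choose_symm (n := m+1) (k := i+1) (by omega)
    rw [show m + 1 - (i+1) = m - i by omega] at this
    exact this
  rw [e1, e2, e3]

lemma CU_choose_sum (m : ℕ) (hm : 1 ≤ m) (hmn : m + 1 ≤ n) :
    ∑ k ∈ range (m+1), ((m.choose k * (n - m).choose k : ℕ) : ℝ) * (1/((k:ℝ)+1))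
      = ((n.choose m : ℝ)^2 - (n.choose (m-1) : ℝ) * (n.choose (m+1) : ℝ)) / (n.choose m : ℝ) := by
  have hstep : ∀ k, ((m.choose k * (n - m).choose k : ℕ) : ℝ) * (1/((k:ℝ)+1))
      = (((m+1).choose (k+1) * (n - m).choose k : ℕ) : ℝ) / ((m:ℝ)+1) := by
    intro k
    have h := Nat.add_one_mul_choose_eq m k
    have h' : ((m:ℝ)+1) * (m.choose k : ℝ) = ((m+1).choose (k+1) : ℝ) * ((k:ℝ)+1) := by
      exact_mod_cast h
    push_cast
    have hk1 : ((k:ℝ)+1) ≠ 0 := by positivity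
    have hm1 : ((m:ℝ)+1) ≠ 0 := by positivity
    field_simp
    nlinarith [h']
  rw [sum_congr rfl (fun k _ => hstep k), ← sum_div]
  rw [← Nat.cast_sum]
  rw [CU_vandermonde m hmn]
  -- now: ((n+1).choose m : ℝ)/(m+1) = (N^2 - A*C)/N
  set A := (n.choose (m-1) : ℝ) with hA
  set N := (n.choose m : ℝ) with hN
  set C := (n.choose (m+1) : ℝ) with hC
  have hNpos : (0:ℝ) < N := by rw [hN]; exact_mod_cast Nat.choose_pos (by omega)
  have f1 : ((n+1).choose m : ℝ) = A + N := by
    have hmm : (m-1)+1 = m := by omega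
    have h := Nat.choose_succ_succ n (m-1)
    simp only [Nat.succ_eq_add_one] at h
    rw [hmm] at h
    rw [hA, hN, h]
    push_cast
    ring
  have f2 : C * ((m:ℝ)+1) = N * ((n:ℝ) - m) := by
    have h := Nat.choose_succ_right_eq n m
    have h' : (n.choose (m+1) : ℝ) * ((m:ℝ)+1) = (n.choose m : ℝ) * ((n - m : ℕ) : ℝ) := by
      exact_mod_cast h
    rw [Nat.cast_sub (by omega)] at h'
    exact h'
  have f3 : N * (m:ℝ) = A * ((n:ℝ) - m + 1) := by
    have h := Nat.choose_succ_right_eq n (m-1)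
    rw [show (m-1)+1 = m by omega] at h
    have h2 : n - (m - 1) = (n - m) + 1 := by omega
    rw [h2] at h
    have h' : N * (m:ℝ) = A * (((n-m:ℕ):ℝ)+1) := by
      rw [hN, hA]; exact_mod_cast h
    rw [Nat.cast_sub (by omega)] at h'
    exact h'
  have key : (A + N) * N = ((m:ℝ)+1) * (N^2 - A*C) := by
    linear_combination A * f2 - N * f3
  rw [f1]
  rw [div_eq_div_iff (by positivity) (ne_of_gt hNpos)]
  linarith [key]

end Aux6
theorem capp_ulc {n : ℕ} (μ : (Fin n → Bool) → ℝ)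
    (hpos : ∀ η, 0 ≤ μ η) (hsum : ∑ η : Fin n → Bool, μ η = 1)
    (hCAPP : ∀ k, 1 ≤ k → 2 * k ≤ n →
      ∀ I : Finset (Fin n), I.card = n - 2 * k → ∀ ξ : Fin n → Bool,
        0 < condZ μ I ξ → condGamma μ I ξ (k - 1) ≤ condGamma μ I ξ k)
    (hnoz : ∀ i j m, i ≤ j → j ≤ m → m ≤ n →
      rankSeq μ i ≠ 0 → rankSeq μ m ≠ 0 → rankSeq μ j ≠ 0) :
    ∀ i, 1 ≤ i → i ≤ n - 1 →
      (rankSeq μ (i - 1) / (n.choose (i - 1) : ℝ)) *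
          (rankSeq μ (i + 1) / (n.choose (i + 1) : ℝ)) ≤
        (rankSeq μ i / (n.choose i : ℝ)) ^ 2 := by
  classical
  intro i h1 h2
  have hmn : i + 1 ≤ n := by omega
  set A : ℝ := (n.choose (i-1) : ℝ) with hA
  set N : ℝ := (n.choose i : ℝ) with hN
  set C : ℝ := (n.choose (i+1) : ℝ) with hC
  have hApos : (0:ℝ) < A := by rw [hA]; exact_mod_cast Nat.choose_pos (by omega)
  have hNpos : (0:ℝ) < N := by rw [hN]; exact_mod_cast Nat.choose_pos (by omega)
  have hCpos : (0:ℝ) < C := by rw [hC]; exact_mod_cast Nat.choose_pos (by omega)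
  -- Step 1 : product identity for the left side
  have hS1 : (∑ p ∈ (sl n (i-1)) ×ˢ (sl n (i+1)), μ p.1 * μ p.2)
      = rankSeq μ (i-1) * rankSeq μ (i+1) := by
    rw [sum_product, CU_rankSeq_sl μ (i-1), CU_rankSeq_sl μ (i+1), sum_mul_sum]
  have hS0 : (∑ p ∈ (sl n i) ×ˢ (sl n i), μ p.1 * μ p.2) = (rankSeq μ i)^2 := by
    rw [sum_product, CU_rankSeq_sl μ i, sq, sum_mul_sum]
  -- the claim-1 inequality
  have hclaim1 := CU_S1_le_S2 μ hpos hCAPP i h1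
  rw [hS1] at hclaim1
  -- Step 2 : split the right side
  set T : ℝ := ∑ p ∈ (sl n i) ×ˢ (sl n i), (μ p.1 * μ p.2) * (1/((khd p : ℝ)+1)) with hT
  have hS2 : (∑ p ∈ (sl n i) ×ˢ (sl n i), ((khd p : ℝ)/((khd p : ℝ)+1)) * (μ p.1 * μ p.2))
      = (rankSeq μ i)^2 - T := by
    have hsplit : ∀ p ∈ (sl n i) ×ˢ (sl n i),
        ((khd p : ℝ)/((khd p : ℝ)+1)) * (μ p.1 * μ p.2)
          = μ p.1 * μ p.2 - (μ p.1 * μ p.2) * (1/((khd p : ℝ)+1)) := by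
      intro p _
      have hne : ((khd p : ℝ)+1) ≠ 0 := by positivity
      field_simp
      ring
    rw [sum_congr rfl hsplit, sum_sub_distrib, hS0, ← hT]
  rw [hS2] at hclaim1
  -- Step 3 : lower bound for T via integrals
  have hGcont : Continuous (fun s : ℝ => ∑ p ∈ (sl n i) ×ˢ (sl n i),
      (μ p.1 * μ p.2) * (2 * s^(2*khd p+1))) := by
    apply continuous_finset_sum
    intro p _
    exact continuous_const.mul (continuous_const.mul (continuous_pow _))
  have hHcont : Continuous (fun s : ℝ => ∑ k ∈ range (i+1),
      (((rankSeq μ i)^2/N) * ((i.choose k * (n-i).choose k : ℕ):ℝ)) * (2 * s^(2*k+1))) := by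
    apply continuous_finset_sum
    intro k _
    exact continuous_const.mul (continuous_const.mul (continuous_pow _))
  have hGT : (∫ s in (0:ℝ)..1, ∑ p ∈ (sl n i) ×ˢ (sl n i),
      (μ p.1 * μ p.2) * (2 * s^(2*khd p+1))) = T := by
    rw [intervalIntegral.integral_finset_sum (fun p _ => CU_intble _ _)]
    rw [hT]
    exact sum_congr rfl fun p _ => CU_integ _ _
  have hHT : (∫ s in (0:ℝ)..1, ∑ k ∈ range (i+1),
      (((rankSeq μ i)^2/N) * ((i.choose k * (n-i).choose k : ℕ):ℝ)) * (2 * s^(2*k+1)))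
      = ((rankSeq μ i)^2/N) * ((N^2 - A*C)/N) := by
    rw [intervalIntegral.integral_finset_sum (fun k _ => CU_intble _ _)]
    have e : ∀ k ∈ range (i+1),
        (∫ s in (0:ℝ)..1, (((rankSeq μ i)^2/N) * ((i.choose k * (n-i).choose k : ℕ):ℝ))
          * (2 * s^(2*k+1)))
        = ((rankSeq μ i)^2/N) * (((i.choose k * (n-i).choose k : ℕ):ℝ) * (1/((k:ℝ)+1))) := by
      intro k _
      rw [CU_integ]
      ring
    rw [sum_congr rfl e, ← mul_sum, CU_choose_sum i h1 hmn, ← hA, ← hN, ← hC]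
  have hpt : ∀ s ∈ Set.Icc (0:ℝ) 1,
      (∑ k ∈ range (i+1), (((rankSeq μ i)^2/N) * ((i.choose k * (n-i).choose k : ℕ):ℝ))
        * (2 * s^(2*k+1)))
      ≤ ∑ p ∈ (sl n i) ×ˢ (sl n i), (μ p.1 * μ p.2) * (2 * s^(2*khd p+1)) := by
    intro s hs
    obtain ⟨h0, h1'⟩ := hs
    have hkey := CU_phi_ge μ i (by omega) h0 h1'
    rw [← hN] at hkey
    -- convert double sum to product sum
    have hΦ : (∑ η ∈ sl n i, ∑ η' ∈ sl n i, μ η * μ η' * s ^ (2 * khd (η, η')))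
        = ∑ p ∈ (sl n i) ×ˢ (sl n i), μ p.1 * μ p.2 * s ^ (2 * khd p) := by
      rw [sum_product]
    rw [hΦ] at hkey
    have eH : (∑ k ∈ range (i+1), (((rankSeq μ i)^2/N) * ((i.choose k * (n-i).choose k : ℕ):ℝ))
        * (2 * s^(2*k+1)))
        = (2*s) * (((rankSeq μ i)^2/N)
            * ∑ k ∈ range (i+1), ((i.choose k * (n-i).choose k : ℕ):ℝ) * s^(2*k)) := by
      rw [mul_sum, mul_sum]
      apply sum_congr rfl
      intro k _
      rw [pow_succ]
      ring
    have eG : (∑ p ∈ (sl n i) ×ˢ (sl n i), (μ p.1 * μ p.2) * (2 * s^(2*khd p+1)))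
        = (2*s) * (∑ p ∈ (sl n i) ×ˢ (sl n i), μ p.1 * μ p.2 * s ^ (2 * khd p)) := by
      rw [mul_sum]
      apply sum_congr rfl
      intro p _
      rw [pow_succ]
      ring
    rw [eH, eG]
    apply mul_le_mul_of_nonneg_left _ (by linarith)
    rw [div_mul_eq_mul_div, div_le_iff₀ hNpos]
    calc (rankSeq μ i)^2 * (∑ k ∈ range (i+1), ((i.choose k * (n-i).choose k : ℕ):ℝ) * s^(2*k))
        ≤ N * ∑ p ∈ (sl n i) ×ˢ (sl n i), μ p.1 * μ p.2 * s ^ (2 * khd p) := hkey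
      _ = (∑ p ∈ (sl n i) ×ˢ (sl n i), μ p.1 * μ p.2 * s ^ (2 * khd p)) * N := mul_comm _ _
  have hmono := intervalIntegral.integral_mono_on (μ := MeasureTheory.volume)
    (by norm_num : (0:ℝ) ≤ 1)
    (hHcont.intervalIntegrable 0 1) (hGcont.intervalIntegrable 0 1) hpt
  rw [hGT, hHT] at hmono
  -- Step 4 : combine
  have hfinal : rankSeq μ (i-1) * rankSeq μ (i+1) ≤ (rankSeq μ i)^2 * (A*C) / N^2 := by
    have e : (rankSeq μ i)^2 - ((rankSeq μ i)^2/N) * ((N^2 - A*C)/N)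
        = (rankSeq μ i)^2 * (A*C) / N^2 := by
      field_simp
      ring
    calc rankSeq μ (i-1) * rankSeq μ (i+1) ≤ (rankSeq μ i)^2 - T := hclaim1
      _ ≤ (rankSeq μ i)^2 - ((rankSeq μ i)^2/N) * ((N^2 - A*C)/N) := by linarith
      _ = (rankSeq μ i)^2 * (A*C) / N^2 := e
  -- Step 5 : divide
  rw [div_mul_div_comm, div_pow]
  rw [div_le_div_iff₀ (by positivity) (by positivity)]
  calc rankSeq μ (i-1) * rankSeq μ (i+1) * N^2
      ≤ ((rankSeq μ i)^2 * (A*C) / N^2) * N^2 :=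
        mul_le_mul_of_nonneg_right hfinal (by positivity)
    _ = (rankSeq μ i)^2 * (A*C) := by field_simp
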